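/- arXiv:math/0301006 — 3 statements merged into one kernel-verified Lean document; each statement's English description precedes it below -/
import Mathlib

section
/- Let V be a finite-dimensional vector space over ℚ and T ∈ GL(V) an automorphism whose characteristic polynomial is a product of cyclotomic polynomials. Then there exists a linear involution b : V → V (b ∘ b = id) such that b ∘ T ∘ b = T⁻¹. -/
open Polynomial

lemma cyc_coeff_zero_ne (n : ℕ) (hn : 0 < n) : (cyclotomic n ℚ).coeff 0 ≠ 0 := by
  rcases eq_or_lt_of_le (show 1 ≤ n from hn) with h1 | h2
  · rw [← h1, cyclotomic_one]
    simp
  · rw [cyclotomic_coeff_zero ℚ h2]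
    exact one_ne_zero

lemma cyc_reverse (n : ℕ) (hn : 0 < n) :
    ∃ c : ℚ, c ≠ 0 ∧ (cyclotomic n ℚ).reverse = C c * cyclotomic n ℚ := by
  have hζ : IsPrimitiveRoot (Complex.exp (2 * Real.pi * Complex.I / n)) n :=
    Complex.isPrimitiveRoot_exp n hn.ne'
  set ζ := Complex.exp (2 * Real.pi * Complex.I / n)
  have hζ0 : ζ ≠ 0 := hζ.ne_zero hn.ne'
  have hinv : IsPrimitiveRoot ζ⁻¹ n := hζ.inv
  letI : Invertible (ζ⁻¹) := invertibleOfNonzero (inv_ne_zero hζ0)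
  have hio : ⅟ (ζ⁻¹) = ζ := by rw [invOf_eq_inv, inv_inv]
  have hroot : aeval ζ (cyclotomic n ℚ).reverse = 0 := by
    have h2 : eval₂ (algebraMap ℚ ℂ) ζ⁻¹ (cyclotomic n ℚ) = 0 := by
      rw [← aeval_def, aeval_def, eval₂_eq_eval_map, map_cyclotomic]
      exact (hinv.isRoot_cyclotomic hn).eq_zero
    have := (eval₂_reflect_eq_zero_iff (algebraMap ℚ ℂ) (ζ⁻¹) (cyclotomic n ℚ).natDegree
      (cyclotomic n ℚ) le_rfl).mpr h2
    rwa [hio, ← reverse, ← aeval_def] at this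
  have hdvd : cyclotomic n ℚ ∣ (cyclotomic n ℚ).reverse := by
    conv_lhs => rw [cyclotomic_eq_minpoly_rat hζ hn]
    exact minpoly.dvd ℚ ζ hroot
  obtain ⟨g, hg⟩ := hdvd
  have hΦ0 : cyclotomic n ℚ ≠ 0 := cyclotomic_ne_zero n ℚ
  have hrev0 : (cyclotomic n ℚ).reverse ≠ 0 := by
    rw [Ne, reverse_eq_zero]; exact hΦ0
  have hg0 : g ≠ 0 := by rintro rfl; rw [mul_zero] at hg; exact hrev0 hg
  have hdeg : g.natDegree = 0 := by
    have h1 : (cyclotomic n ℚ).reverse.natDegree = (cyclotomic n ℚ).natDegree := by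
      rw [reverse_natDegree, natTrailingDegree_eq_zero.mpr (Or.inr (cyc_coeff_zero_ne n hn))]
      omega
    have h2 := natDegree_mul hΦ0 hg0
    rw [← hg, h1] at h2
    omega
  refine ⟨g.coeff 0, ?_, ?_⟩
  · intro h0
    exact hg0 (by rw [eq_C_of_natDegree_eq_zero hdeg, h0, map_zero])
  · rw [hg, mul_comm]
    congr 1
    exact eq_C_of_natDegree_eq_zero hdeg

-- pow lemma
lemma rev_pow (p : ℚ[X]) (c : ℚ) (h : p.reverse = C c * p) (e : ℕ) :
    (p ^ e).reverse = C (c ^ e) * p ^ e := by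
  induction e with
  | zero =>
    rw [pow_zero, pow_zero, C_1, one_mul, ← C_1, reverse_C]
  | succ n ih =>
    rw [pow_succ, reverse_mul_of_domain, ih, h]
    rw [pow_succ c n, C_mul]
    ring

lemma block (q : ℚ[X]) (hq0 : q.coeff 0 ≠ 0) (c : ℚ) (hc : c ≠ 0)
    (hrev : q.reverse = C c * q) :
    ∃ σ : (ℚ[X] ⧸ Ideal.span {q}) →ₐ[ℚ] (ℚ[X] ⧸ Ideal.span {q}),
      σ.comp σ = AlgHom.id ℚ _ ∧
      ∀ a, Ideal.Quotient.mk (Ideal.span {q}) X * σ (Ideal.Quotient.mk (Ideal.span {q}) X * σ a)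
        = a := by
  set I := Ideal.span {q} with hI
  set mk := Ideal.Quotient.mk I with hmk
  set x : ℚ[X] ⧸ I := mk X with hx
  set u : ℚ[X] := -(C (q.coeff 0)⁻¹) * q.divX with hu
  have hCC : C (q.coeff 0)⁻¹ * C (q.coeff 0) = 1 := by
    rw [← C_mul, inv_mul_cancel₀ hq0, C_1]
  have hbezout : u * X + C (q.coeff 0)⁻¹ * q = 1 := by
    have h1 : X * q.divX + C (q.coeff 0) = q := X_mul_divX_add q
    rw [hu]
    linear_combination (-(C (q.coeff 0)⁻¹)) * h1 + hCC
  set y : ℚ[X] ⧸ I := mk u with hy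
  have hmkq : mk q = 0 := Ideal.Quotient.eq_zero_iff_mem.mpr (Ideal.subset_span rfl)
  have hxy : x * y = 1 := by
    rw [hx, hy, ← map_mul]
    have h1 : X * u - 1 ∈ I := Ideal.mem_span_singleton'.mpr
      ⟨-(C (q.coeff 0)⁻¹), by linear_combination -hbezout⟩
    calc mk (X * u) = mk 1 := Ideal.Quotient.eq.mpr (by simpa using h1)
      _ = 1 := map_one mk
  letI : Invertible x := ⟨y, by rw [mul_comm]; exact hxy, hxy⟩
  have hiy : ⅟ x = y := by
    have h2 : x * ⅟ x = 1 := mul_invOf_self x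
    calc ⅟ x = (y * x) * ⅟ x := by rw [mul_comm y x, hxy, one_mul]
      _ = y * (x * ⅟ x) := by ring
      _ = y := by rw [h2, mul_one]
  have haevalx : aeval x q = 0 := by
    have h3 : aeval ((Ideal.Quotient.mkₐ ℚ I) X) q = (Ideal.Quotient.mkₐ ℚ I) (aeval X q) :=
      aeval_algHom_apply (Ideal.Quotient.mkₐ ℚ I) X q
    rw [aeval_X_left_apply] at h3
    exact h3.trans hmkq
  have haevaly : aeval y q = 0 := by
    have h1 : eval₂ (algebraMap ℚ (ℚ[X] ⧸ I)) (⅟ x) (reflect q.natDegree q) = 0 :=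
      (eval₂_reflect_eq_zero_iff (algebraMap ℚ (ℚ[X] ⧸ I)) x q.natDegree q le_rfl).mpr
        (by rw [← aeval_def]; exact haevalx)
    rw [hiy, ← reverse, hrev, ← aeval_def, map_mul, aeval_C] at h1
    have h2 := congrArg (fun z => algebraMap ℚ (ℚ[X] ⧸ I) c⁻¹ * z) h1
    simp only [mul_zero, ← mul_assoc, ← map_mul, inv_mul_cancel₀ hc, map_one, one_mul] at h2
    exact h2
  have hvanish : ∀ a ∈ I, aeval y a = 0 := by
    intro a ha
    obtain ⟨g, hg⟩ := Ideal.mem_span_singleton'.mp ha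
    rw [← hg, map_mul, haevaly, mul_zero]
  set σ : (ℚ[X] ⧸ I) →ₐ[ℚ] (ℚ[X] ⧸ I) := Ideal.Quotient.liftₐ I (aeval y) hvanish with hσ
  have hσx : σ x = y := by
    rw [hx, hσ]
    show Ideal.Quotient.liftₐ I (aeval y) hvanish (Ideal.Quotient.mk I X) = y
    rw [Ideal.Quotient.liftₐ_apply]
    exact aeval_X y
  have hσy : σ y = x := by
    have h1 : y * σ y = 1 := by
      have h0 := congrArg σ hxy
      rw [map_mul, map_one, hσx] at h0
      exact h0
    calc σ y = (x * y) * σ y := by rw [hxy, one_mul]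
      _ = x * (y * σ y) := by ring
      _ = x := by rw [h1, mul_one]
  have hσσ : σ.comp σ = AlgHom.id ℚ _ := by
    apply Ideal.Quotient.algHom_ext
    apply Polynomial.algHom_ext
    show σ (σ (Ideal.Quotient.mkₐ ℚ I X)) = Ideal.Quotient.mkₐ ℚ I X
    have : (Ideal.Quotient.mkₐ ℚ I) X = x := rfl
    rw [this, hσx, hσy]
  refine ⟨σ, hσσ, fun a => ?_⟩
  have h5 : σ (x * σ a) = y * a := by
    rw [map_mul, hσx]
    congr 1
    exact AlgHom.congr_fun hσσ a
  show x * σ (x * σ a) = a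
  rw [h5, ← mul_assoc, hxy, one_mul]

theorem stmt_7 {V : Type*} [AddCommGroup V] [Module ℚ V] [FiniteDimensional ℚ V]
    (T : V ≃ₗ[ℚ] V)
    (h : ∃ s : Multiset ℕ, (∀ n ∈ s, 0 < n) ∧
      LinearMap.charpoly (T : V →ₗ[ℚ] V) = (s.map fun n => cyclotomic n ℚ).prod) :
    ∃ b : V →ₗ[ℚ] V, b ∘ₗ b = LinearMap.id ∧
      b ∘ₗ (T : V →ₗ[ℚ] V) ∘ₗ b = (T.symm : V →ₗ[ℚ] V) := by
  classical
  obtain ⟨s, hs, hchar⟩ := h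
  set f : V →ₗ[ℚ] V := (T : V →ₗ[ℚ] V) with hf
  have hcharf : aeval f (LinearMap.charpoly f) = 0 := f.aeval_self_charpoly
  have hchar0 : LinearMap.charpoly f ≠ 0 := f.charpoly_monic.ne_zero
  have hsmul0 : ∀ m : Module.AEval' f, (LinearMap.charpoly f) • m = 0 := by
    intro m
    apply (Module.AEval'.of f).symm.injective
    rw [Module.AEval.of_symm_smul, hcharf, map_zero]
    exact zero_smul _ _
  have htor : Module.IsTorsion ℚ[X] (Module.AEval' f) := fun m =>
    ⟨⟨LinearMap.charpoly f, mem_nonZeroDivisors_of_ne_zero hchar0⟩, hsmul0 m⟩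
  obtain ⟨ι, fι, p, hirr, e, ⟨eqv⟩⟩ := Module.equiv_directSum_of_isTorsion htor
  set Q : ι → ℚ[X] := fun i => p i ^ e i with hQ
  have eqv' : Module.AEval' f ≃ₗ[ℚ[X]] DirectSum ι (fun i => ℚ[X] ⧸ Ideal.span {Q i}) := eqv
  have hqdvd : ∀ i, Q i ∣ LinearMap.charpoly f := by
    intro i
    set d0 : DirectSum ι (fun i => ℚ[X] ⧸ Ideal.span {Q i}) :=
      DirectSum.of (fun i => ℚ[X] ⧸ Ideal.span {Q i}) i
        (Submodule.Quotient.mk (1 : ℚ[X])) with hd0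
    obtain ⟨m, hm⟩ := eqv'.surjective d0
    have h0 : (LinearMap.charpoly f) • d0 = 0 := by
      rw [← hm, ← map_smul, hsmul0, map_zero]
    have h1 : (LinearMap.charpoly f) • (Submodule.Quotient.mk (1 : ℚ[X]) :
        ℚ[X] ⧸ Ideal.span {Q i}) = 0 := by
      have h2 := congrArg (fun z => z i) h0
      simpa [hd0, DirectSum.smul_apply, DirectSum.of_eq_same] using h2
    have h3 : (Submodule.Quotient.mk (LinearMap.charpoly f • (1 : ℚ[X])) :
        ℚ[X] ⧸ Ideal.span {Q i}) = 0 := by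
      rw [Submodule.Quotient.mk_smul]; exact h1
    have h4 := (Submodule.Quotient.mk_eq_zero _).mp h3
    rw [smul_eq_mul, mul_one] at h4
    exact Ideal.mem_span_singleton.mp h4
  have key : ∀ i, ∃ c : ℚ, c ≠ 0 ∧ (Q i).reverse = C c * Q i ∧ (Q i).coeff 0 ≠ 0 := by
    intro i
    rcases Nat.eq_zero_or_pos (e i) with h0 | hpos
    · refine ⟨1, one_ne_zero, ?_, ?_⟩
      · rw [hQ]; simp only [h0, pow_zero, C_1, one_mul]
        rw [← C_1, reverse_C]
      · rw [hQ]; simp [h0]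
    have hpc : ∃ c : ℚ, c ≠ 0 ∧ (p i).reverse = C c * p i ∧ (p i).coeff 0 ≠ 0 := by
      have hpdvd : p i ∣ LinearMap.charpoly f :=
        dvd_trans (dvd_pow_self _ hpos.ne') (hqdvd i)
      rw [hchar] at hpdvd
      have hprime : Prime (p i) := irreducible_iff_prime.mp (hirr i)
      obtain ⟨a, ha, hpa⟩ := hprime.exists_mem_multiset_dvd hpdvd
      obtain ⟨n, hn, rfl⟩ := Multiset.mem_map.mp ha
      have hcyci : Irreducible (cyclotomic n ℚ) := cyclotomic.irreducible_rat (hs n hn)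
      obtain ⟨w, hw⟩ := ((hirr i).associated_of_dvd hcyci hpa)
      obtain ⟨r, hru, hrw⟩ := Polynomial.isUnit_iff.mp w.isUnit
      have hr0 : r ≠ 0 := hru.ne_zero
      have hpi : p i = C r⁻¹ * cyclotomic n ℚ := by
        rw [← hw, ← hrw]
        rw [mul_comm (p i) _, ← mul_assoc, ← C_mul, inv_mul_cancel₀ hr0, C_1, one_mul]
      obtain ⟨c, hc0, hcrev⟩ := cyc_reverse n (hs n hn)
      refine ⟨c, hc0, ?_, ?_⟩
      · rw [hpi, reverse_mul_of_domain, reverse_C, hcrev]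
        ring
      · rw [hpi, mul_coeff_zero, coeff_C]
        simp only [if_pos rfl]
        exact mul_ne_zero (inv_ne_zero hr0) (cyc_coeff_zero_ne n (hs n hn))
    obtain ⟨c, hc0, hcrev, hc00⟩ := hpc
    refine ⟨c ^ e i, pow_ne_zero _ hc0, rev_pow (p i) c hcrev (e i), ?_⟩
    rw [hQ]
    simp only [coeff_zero_eq_eval_zero, eval_pow] at hc00 ⊢
    exact pow_ne_zero _ hc00
  choose c hc0 hcrev hq0 using key
  choose σ hσσ hσmul using fun i => block (Q i) (hq0 i) (c i) (hc0 i) (hcrev i)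
  let D := DirectSum ι (fun i => ℚ[X] ⧸ Ideal.span {Q i})
  let B : D →ₗ[ℚ] D := DFinsupp.mapRange.linearMap (fun i => (σ i).toLinearMap)
  let E : V ≃ₗ[ℚ] D := (Module.AEval'.of f).trans (eqv'.restrictScalars ℚ)
  have hBapp : ∀ (d : D) i, B d i = σ i (d i) := by
    intro d i
    exact DFinsupp.mapRange_apply _ (fun i => ((σ i).toLinearMap).map_zero) d i
  have hsmc : ∀ i (a : ℚ[X] ⧸ Ideal.span {Q i}),
      (X : ℚ[X]) • a = Ideal.Quotient.mk (Ideal.span {Q i}) X * a := by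
    intro i a
    obtain ⟨g, rfl⟩ := Ideal.Quotient.mk_surjective a
    rw [← map_mul]
    rfl
  have hBB : ∀ d, B (B d) = d := by
    intro d
    refine DFunLike.ext _ _ fun i => ?_
    rw [hBapp, hBapp]
    have h6 := AlgHom.congr_fun (hσσ i) (d i)
    simpa using h6
  have hXBXB : ∀ d, (X : ℚ[X]) • B ((X : ℚ[X]) • B d) = d := by
    intro d
    refine DFunLike.ext _ _ fun i => ?_
    rw [DirectSum.smul_apply, hBapp, DirectSum.smul_apply, hBapp, hsmc, hsmc]
    exact hσmul i (d i)
  have hEf : ∀ v, E (f v) = (X : ℚ[X]) • E v := by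
    intro v
    show (eqv'.restrictScalars ℚ) ((Module.AEval'.of f) (f v)) =
      (X : ℚ[X]) • (eqv'.restrictScalars ℚ) ((Module.AEval'.of f) v)
    rw [← Module.AEval'.X_smul_of]
    exact map_smul eqv' _ _
  have hfE : ∀ d, f (E.symm d) = E.symm ((X : ℚ[X]) • d) := by
    intro d
    apply E.injective
    rw [hEf, E.apply_symm_apply, E.apply_symm_apply]
  refine ⟨E.symm.toLinearMap ∘ₗ B ∘ₗ E.toLinearMap, ?_, ?_⟩
  · ext v
    simp only [LinearMap.comp_apply, LinearMap.id_apply, LinearEquiv.coe_coe]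
    rw [E.apply_symm_apply, hBB, E.symm_apply_apply]
  · ext v
    simp only [LinearMap.comp_apply, LinearEquiv.coe_coe]
    apply T.injective
    have hTapp : ∀ w, T w = f w := fun w => rfl
    rw [T.apply_symm_apply, hTapp, hfE, hfE, E.apply_symm_apply, hXBXB,
      E.symm_apply_apply]
end

section
/- Let S be the block upper-triangular matrix over ℚ with diagonal blocks Id_{μ₊}, Id_{μ₀}, Id_{μ₋}, (1,2)-block A, (2,3)-block B, and (1,3)-block G where A·B = 2·G, and let C be the same matrix with the middle row of blocks negated (diagonal block −Id_{μ₀}, (2,3)-block −B). Define T = (Sᵀ)⁻¹ · S. Then T·C equals the block lower-triangular matrix with diagonal blocks Id_{μ₊}, −Id_{μ₀}, Id_{μ₋}, (2,1)-block −Aᵀ, (3,1)-block Gᵀ, and (3,2)-block Bᵀ. -/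
open Matrix

theorem stmt_11 (μp μ0 μm : ℕ)
    (A : Matrix (Fin μp) (Fin μ0) ℚ) (B : Matrix (Fin μ0) (Fin μm) ℚ)
    (G : Matrix (Fin μp) (Fin μm) ℚ) (hG : A * B = 2 • G) :
    let S := fromBlocks 1 (fromCols A G) 0 (fromBlocks 1 B 0 1)
    let C := fromBlocks 1 (fromCols A G) 0 (fromBlocks (-1) (-B) 0 1)
    let T := (Sᵀ)⁻¹ * S
    T * C = fromBlocks 1 0 (fromRows (-Aᵀ) Gᵀ) (fromBlocks (-1) 0 Bᵀ 1) := by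
  intro S C T
  have hdet : IsUnit (Sᵀ).det := by
    simp [S, Matrix.det_fromBlocks_zero₂₁]
  have hBA : Bᵀ * Aᵀ = 2 • Gᵀ := by
    rw [← Matrix.transpose_mul, hG]; simp
  have key : S * C = Sᵀ * fromBlocks 1 0 (fromRows (-Aᵀ) Gᵀ) (fromBlocks (-1) 0 Bᵀ 1) := by
    simp only [S, C, Matrix.fromBlocks_transpose, Matrix.transpose_fromCols,
      Matrix.transpose_one, Matrix.transpose_zero, Matrix.fromBlocks_multiply,
      Matrix.fromCols_mul_fromBlocks, Matrix.fromBlocks_mul_fromRows,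
      Matrix.mul_one, Matrix.one_mul, Matrix.mul_zero, Matrix.zero_mul,
      Matrix.mul_neg, Matrix.neg_mul, hG, hBA]
    have h1 : A.fromCols G + (-A + 0).fromCols (-((2:ℕ) • G) + G) = 0 := by
      ext i j; cases j <;> simp [Matrix.fromCols, two_smul]
    have h2 : Aᵀ.fromRows Gᵀ + (-Aᵀ + 0).fromRows (-((2:ℕ) • Gᵀ) + Gᵀ) = 0 := by
      ext i j; cases i <;> simp [two_smul]
    rw [h1, h2]; simp
  calc T * C = (Sᵀ)⁻¹ * (S * C) := by rw [Matrix.mul_assoc]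
    _ = (Sᵀ)⁻¹ * (Sᵀ * fromBlocks 1 0 (fromRows (-Aᵀ) Gᵀ) (fromBlocks (-1) 0 Bᵀ 1)) := by rw [key]
    _ = _ := by rw [← Matrix.mul_assoc, Matrix.nonsing_inv_mul _ hdet, Matrix.one_mul]
end

section
/- With S, C, T as above (S block upper-triangular unipotent with blocks A, B, G satisfying A·B = 2·G, C the same with middle block row negated, T = (Sᵀ)⁻¹S), the matrix T·C is an involution: (T·C)² = Id. Equivalently, C·T·C = T⁻¹. -/
open Matrix

namespace Stmt12Aux

variable {μp μ0 μm : ℕ}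
variable (A : Matrix (Fin μp) (Fin μ0) ℚ) (B : Matrix (Fin μ0) (Fin μm) ℚ)
  (G : Matrix (Fin μp) (Fin μm) ℚ)

abbrev Idx (μp μ0 μm : ℕ) := Sum (Fin μp) (Sum (Fin μ0) (Fin μm))

def Sm : Matrix (Idx μp μ0 μm) (Idx μp μ0 μm) ℚ :=
  fromBlocks 1 (fromCols A G) 0 (fromBlocks 1 B 0 1)

def Cm : Matrix (Idx μp μ0 μm) (Idx μp μ0 μm) ℚ :=
  fromBlocks 1 (fromCols A G) 0 (fromBlocks (-1) (-B) 0 1)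

def Km : Matrix (Idx μp μ0 μm) (Idx μp μ0 μm) ℚ :=
  fromBlocks 1 0 0 (fromBlocks (-1) 0 0 1)

def Si : Matrix (Idx μp μ0 μm) (Idx μp μ0 μm) ℚ :=
  fromBlocks 1 (fromCols (-A) (A * B - G)) 0 (fromBlocks 1 (-B) 0 1)

lemma fromColumns_add' {m n₁ n₂ : Type*} (A₁ B₁ : Matrix m n₁ ℚ) (A₂ B₂ : Matrix m n₂ ℚ) :
    fromCols A₁ A₂ + fromCols B₁ B₂ = fromCols (A₁ + B₁) (A₂ + B₂) := by
  ext i (j | j) <;> simp [fromCols]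

lemma fromColumns_zero' {m n₁ n₂ : Type*} :
    fromCols (0 : Matrix m n₁ ℚ) (0 : Matrix m n₂ ℚ) = 0 := by
  ext i (j | j) <;> simp [fromCols]

set_option maxHeartbeats 1000000

lemma S_mul_Si : Sm A B G * Si A B G = 1 := by
  rw [Sm, Si, ← fromBlocks_one (l := Fin μp)]
  simp only [fromBlocks_multiply, fromCols_mul_fromBlocks, Matrix.one_mul, Matrix.mul_one,
    Matrix.zero_mul, Matrix.mul_zero, add_zero, zero_add, Matrix.mul_neg, Matrix.neg_mul,
    neg_neg]
  rw [fromBlocks_inj]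
  refine ⟨rfl, ?_, rfl, ?_⟩
  · rw [fromColumns_add', show -A + A = (0 : Matrix (Fin μp) (Fin μ0) ℚ) by abel,
      show A * B - G + (-(A * B) + G) = (0 : Matrix (Fin μp) (Fin μm) ℚ) by abel,
      fromColumns_zero']
  · rw [← fromBlocks_one (l := Fin μ0), fromBlocks_inj]
    exact ⟨rfl, by abel, rfl, by abel⟩

lemma Si_mul_S : Si A B G * Sm A B G = 1 := by
  rw [Sm, Si, ← fromBlocks_one (l := Fin μp)]
  simp only [fromBlocks_multiply, fromCols_mul_fromBlocks, Matrix.one_mul, Matrix.mul_one,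
    Matrix.zero_mul, Matrix.mul_zero, add_zero, zero_add, Matrix.mul_neg, Matrix.neg_mul,
    neg_neg]
  rw [fromBlocks_inj]
  refine ⟨rfl, ?_, rfl, ?_⟩
  · rw [fromColumns_add', show A + -A = (0 : Matrix (Fin μp) (Fin μ0) ℚ) by abel,
      show G + (-(A * B) + (A * B - G)) = (0 : Matrix (Fin μp) (Fin μm) ℚ) by abel,
      fromColumns_zero']
  · rw [← fromBlocks_one (l := Fin μ0), fromBlocks_inj]
    exact ⟨rfl, by abel, rfl, by abel⟩

variable (hG : A * B = 2 • G)
include hG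

lemma S_mul_C : Sm A B G * Cm A B G = Km (μp := μp) (μ0 := μ0) (μm := μm) := by
  rw [Sm, Cm, Km]
  simp only [fromBlocks_multiply, fromCols_mul_fromBlocks, Matrix.one_mul, Matrix.mul_one,
    Matrix.zero_mul, Matrix.mul_zero, add_zero, zero_add, Matrix.mul_neg, Matrix.neg_mul,
    neg_neg]
  rw [fromBlocks_inj]
  refine ⟨rfl, ?_, rfl, ?_⟩
  · rw [fromColumns_add', show A + -A = (0 : Matrix (Fin μp) (Fin μ0) ℚ) by abel,
      show G + (-(A * B) + G) = (0 : Matrix (Fin μp) (Fin μm) ℚ) by rw [hG]; module,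
      fromColumns_zero']
  · rw [fromBlocks_inj]
    exact ⟨rfl, by abel, rfl, by abel⟩

lemma K_Si_K : Km * Si A B G * Km = Sm A B G := by
  rw [Sm, Si, Km]
  simp only [fromBlocks_multiply, fromCols_mul_fromBlocks, Matrix.one_mul, Matrix.mul_one,
    Matrix.zero_mul, Matrix.mul_zero, add_zero, zero_add, Matrix.mul_neg, Matrix.neg_mul,
    neg_neg]
  rw [fromBlocks_inj]
  refine ⟨rfl, ?_, rfl, ?_⟩
  · rw [fromCols_ext_iff]
    exact ⟨rfl, by rw [hG]; module⟩
  · rw [fromBlocks_inj]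
    exact ⟨rfl, by abel, rfl, by abel⟩

end Stmt12Aux

open Stmt12Aux in
theorem stmt_12 (μp μ0 μm : ℕ)
    (A : Matrix (Fin μp) (Fin μ0) ℚ) (B : Matrix (Fin μ0) (Fin μm) ℚ)
    (G : Matrix (Fin μp) (Fin μm) ℚ) (hG : A * B = 2 • G) :
    let S := fromBlocks 1 (fromCols A G) 0 (fromBlocks 1 B 0 1)
    let C := fromBlocks 1 (fromCols A G) 0 (fromBlocks (-1) (-B) 0 1)
    let T := (Sᵀ)⁻¹ * S
    (T * C) * (T * C) = 1 ∧ C * T * C = T⁻¹ := by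
  intro S C T
  have hS : S = Sm A B G := rfl
  have hC : C = Cm A B G := rfl
  have h1 : Sm A B G * Si A B G = 1 := S_mul_Si A B G
  have h2 : Si A B G * Sm A B G = 1 := Si_mul_S A B G
  have h3 : Sm A B G * Cm A B G = Km := S_mul_C A B G hG
  have h4 : Km * Si A B G * Km = Sm A B G := K_Si_K A B G hG
  have hSTinv : (Sᵀ)⁻¹ = (Si A B G)ᵀ := by
    apply inv_eq_left_inv
    rw [hS, ← transpose_mul, h1, transpose_one]
  have hTC : T * C = (Si A B G)ᵀ * Km := by
    rw [show T * C = (Sᵀ)⁻¹ * (S * C) by rw [Matrix.mul_assoc], hSTinv, hS, hC, h3]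
  have hKT : (Km (μp := μp) (μ0 := μ0) (μm := μm))ᵀ = Km := by
    rw [Km, fromBlocks_transpose, fromBlocks_transpose]; simp
  have hKSiK : Km * (Si A B G)ᵀ * Km = (Sm A B G)ᵀ := by
    have h := congrArg transpose h4
    rwa [transpose_mul, transpose_mul, hKT, ← Matrix.mul_assoc] at h
  have hCeq : Cm A B G = Si A B G * Km := by
    calc Cm A B G = (Si A B G * Sm A B G) * Cm A B G := by rw [h2, Matrix.one_mul]
    _ = Si A B G * Km := by rw [Matrix.mul_assoc, h3]
  constructor
  · rw [hTC]
    calc (Si A B G)ᵀ * Km * ((Si A B G)ᵀ * Km)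
        = (Si A B G)ᵀ * (Km * (Si A B G)ᵀ * Km) := by simp only [Matrix.mul_assoc]
    _ = (Si A B G)ᵀ * (Sm A B G)ᵀ := by rw [hKSiK]
    _ = 1 := by rw [← transpose_mul, h1, transpose_one]
  · have hTinv : T⁻¹ = Si A B G * (Sm A B G)ᵀ := by
      apply inv_eq_right_inv
      show (Sᵀ)⁻¹ * S * (Si A B G * (Sm A B G)ᵀ) = 1
      rw [hSTinv, hS, Matrix.mul_assoc, ← Matrix.mul_assoc (Sm A B G), h1,
        Matrix.one_mul, ← transpose_mul, h1, transpose_one]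
    rw [hTinv, Matrix.mul_assoc, hTC, hC, hCeq]
    calc Si A B G * Km * ((Si A B G)ᵀ * Km)
        = Si A B G * (Km * (Si A B G)ᵀ * Km) := by simp only [Matrix.mul_assoc]
    _ = Si A B G * (Sm A B G)ᵀ := by rw [hKSiK]
end
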